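/- For u ∈ W^J and w ∈ W with parabolic factorization w = w^J · w_J (w^J ∈ W^J, w_J ∈ W_J), if u is not less than or equal to w^J in Bruhat order then (T_{u^{-1}} C_w)|_J = 0. -/

import Mathlib

open LaurentPolynomial

noncomputable section
attribute [local instance] Classical.propDecidable

namespace HeckeRes

variable {B : Type} {W : Type} [Group W] {M : CoxeterMatrix B}

/-- The Laurent polynomial ring ℤ[q^{±1}]. -/
abbrev R : Type := LaurentPolynomial ℤ

/-- The variable q. -/
abbrev q : R := LaurentPolynomial.T 1

/-- The inverse variable q⁻¹. -/
abbrev qinv : R := LaurentPolynomial.T (-1)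

/-- Bruhat order: u ≤ w iff some reduced word for w has a subword with product u. -/
def bruhatLE (cs : CoxeterSystem M W) (u w : W) : Prop :=
  ∃ l : List B, cs.IsReduced l ∧ cs.wordProd l = w ∧
    ∃ l' : List B, l'.Sublist l ∧ cs.wordProd l' = u

def bruhatLT (cs : CoxeterSystem M W) (u w : W) : Prop :=
  bruhatLE cs u w ∧ u ≠ w

/-- The standard parabolic subgroup W_J. -/
def WJ (cs : CoxeterSystem M W) (J : Set B) : Subgroup W :=
  Subgroup.closure (cs.simple '' J)

/-- Minimal length representatives of left cosets W/W_J: no right descents in J. -/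
def IsMinRep (cs : CoxeterSystem M W) (J : Set B) (u : W) : Prop :=
  ∀ i ∈ J, cs.length (u * cs.simple i) = cs.length u + 1

/-- Minimal length representatives of right cosets W_J\W: no left descents in J. -/
def IsMinRepR (cs : CoxeterSystem M W) (J : Set B) (u : W) : Prop :=
  ∀ i ∈ J, cs.length (cs.simple i * u) = cs.length u + 1

variable {H : Type} [Ring H] [Algebra R H]

/-- Axioms making a basis of H indexed by W into the standard basis of the Hecke
algebra of (W,S), with quadratic relation T_s² = 1 + (q⁻¹ - q) T_s. -/
structure IsHeckeBasis (cs : CoxeterSystem M W) (Tb : Module.Basis W R H) : Prop where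
  T_one : Tb 1 = 1
  T_mul : ∀ u v : W, cs.length (u * v) = cs.length u + cs.length v →
    Tb u * Tb v = Tb (u * v)
  simple_mul : ∀ (i : B) (w : W), cs.length (cs.simple i * w) < cs.length w →
    Tb (cs.simple i) * Tb w = Tb (cs.simple i * w) + (qinv - q) • Tb w
  mul_simple : ∀ (w : W) (i : B), cs.length (w * cs.simple i) < cs.length w →
    Tb w * Tb (cs.simple i) = Tb (w * cs.simple i) + (qinv - q) • Tb w

/-- The restriction map |_J : H → H, T_w ↦ T_w if w ∈ W_J and 0 otherwise. -/
def resMap (cs : CoxeterSystem M W) (Tb : Module.Basis W R H) (J : Set B) : H →ₗ[R] H :=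
  Tb.constr R (fun w => if w ∈ WJ cs J then Tb w else 0)

/-- The parabolic subalgebra H_J, as the span of {T_w : w ∈ W_J}. -/
def HJ (cs : CoxeterSystem M W) (Tb : Module.Basis W R H) (J : Set B) : Submodule R H :=
  Submodule.span R (Tb '' (WJ cs J : Set W))

/-- A Laurent polynomial lies in ℤ[q]. -/
def IsPoly (p : R) : Prop := ∃ f : Polynomial ℤ, p = f.toLaurent

/-- Axioms for the Kazhdan–Lusztig basis: C_w = Σ_{x ≤ w} h_{x,w}(q) T_x with
h_{w,w} = 1 and h_{x,w} ∈ qℤ[q] for x ≠ w. -/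
structure IsKLBasis (cs : CoxeterSystem M W) (Tb : Module.Basis W R H) (C : W → H) : Prop where
  repr_self : ∀ w : W, Tb.repr (C w) w = 1
  repr_eq_zero : ∀ x w : W, ¬ bruhatLE cs x w → Tb.repr (C w) x = 0
  repr_mem : ∀ x w : W, x ≠ w → ∃ f : Polynomial ℤ,
    Tb.repr (C w) x = q * f.toLaurent

/-- The KL polynomial h_{y,x}. -/
def klPoly (Tb : Module.Basis W R H) (C : W → H) (y x : W) : R := Tb.repr (C x) y

/-- μ(y,x): the coefficient of q in h_{y,x}. -/
def klMu (Tb : Module.Basis W R H) (C : W → H) (y x : W) : ℤ :=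
  (klPoly Tb C y x).coeff 1


open List CoxeterSystem

variable (cs : CoxeterSystem M W)

local prefix:100 "s" => cs.simple
local prefix:100 "π" => cs.wordProd
local prefix:100 "ℓ" => cs.length

/-- Tits' reflection-sign involution for a single generator. -/
def titsFun (i : B) : W × ℤˣ → W × ℤˣ :=
  fun p => (s i * p.1 * s i, if p.1 = s i then -p.2 else p.2)

theorem titsFun_involutive (i : B) : Function.Involutive (titsFun cs i) := by
  intro p
  unfold titsFun
  have hss : s i * s i = 1 := cs.simple_mul_simple_self i
  have h1 : s i * (s i * p.1 * s i) * s i = p.1 := by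
    simp only [← mul_assoc, hss, one_mul]
    rw [mul_assoc, hss, mul_one]
  have h : s i * p.1 * s i = s i ↔ p.1 = s i := by
    constructor
    · intro hcond
      have := congrArg (fun x => s i * x * s i) hcond
      rw [h1] at this
      rw [this, hss, one_mul]
    · intro hcond; rw [hcond, mul_assoc, hss, mul_one]
  dsimp only
  rw [h1]
  by_cases hp : p.1 = s i
  · rw [if_pos hp, if_pos (h.mpr hp), neg_neg]
  · rw [if_neg hp, if_neg (fun hc => hp (h.mp hc))]

/-- Tits' permutation for a single generator. -/
def titsPerm (i : B) : Equiv.Perm (W × ℤˣ) :=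
  (titsFun_involutive cs i).toPerm

@[simp] theorem titsPerm_apply (i : B) (p : W × ℤˣ) :
    titsPerm cs i p = (s i * p.1 * s i, if p.1 = s i then -p.2 else p.2) := rfl

section Lift

variable (i i' : B)

private def pr : W := cs.simple i * cs.simple i'

private def cseq (n : ℕ) : W := ((pr cs i i')⁻¹)^n * cs.simple i'

private theorem pr_inv : (pr cs i i')⁻¹ = s i' * s i := by
  show (s i * s i')⁻¹ = s i' * s i
  rw [mul_inv_rev, cs.inv_simple, cs.inv_simple]

private theorem simple_mul_pr_pow (k : ℕ) :
    s i' * (pr cs i i')^k = ((pr cs i i')⁻¹)^k * s i' := by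
  induction k with
  | zero => simp
  | succ k ih =>
    have h1 : s i' * pr cs i i' = (pr cs i i')⁻¹ * s i' := by
      rw [pr_inv]
      show s i' * (s i * s i') = s i' * s i * s i'
      group
    rw [pow_succ, ← mul_assoc, ih, mul_assoc, h1, pow_succ']
    group

private theorem simple_mul_pr_inv_pow (k : ℕ) :
    s i' * ((pr cs i i')⁻¹)^k = (pr cs i i')^k * s i' := by
  induction k with
  | zero => simp
  | succ k ih =>
    have h1 : s i' * (pr cs i i')⁻¹ = pr cs i i' * s i' := by
      rw [pr_inv]
      show s i' * (s i' * s i) = s i * s i' * s i'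
      rw [cs.simple_mul_simple_cancel_left, mul_assoc, cs.simple_mul_simple_self, mul_one]
    rw [pow_succ, ← mul_assoc, ih, mul_assoc, h1, pow_succ']
    group

private theorem titsPerm_mul_apply (v : W) (δ : ℤˣ) :
    (titsPerm cs i * titsPerm cs i') (v, δ) =
      (pr cs i i' * v * (pr cs i i')⁻¹,
        δ * ((if v = cseq cs i i' 0 then (-1:ℤˣ) else 1)
           * (if v = cseq cs i i' 1 then (-1:ℤˣ) else 1))) := by
  have h2 := cs.simple_mul_simple_self i'
  have hc0 : (v = cseq cs i i' 0) ↔ (v = s i') := by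
    unfold cseq; rw [pow_zero, one_mul]
  have hc1 : (v = cseq cs i i' 1) ↔ (s i' * v * s i' = s i) := by
    have hcs : cseq cs i i' 1 = s i' * s i * s i' := by
      unfold cseq; rw [pow_one, pr_inv]
    rw [hcs]
    constructor
    · intro h
      rw [h]
      calc s i' * (s i' * s i * s i') * s i' = (s i' * s i') * s i * (s i' * s i') := by group
        _ = s i := by rw [h2, one_mul, mul_one]
    · intro h
      rw [← h]
      exact ((calc s i' * (s i' * v * s i') * s i' = (s i' * s i') * v * (s i' * s i') := by group
        _ = v := by rw [h2, one_mul, mul_one])).symm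
  show (titsPerm cs i) ((titsPerm cs i') (v, δ)) = _
  rw [titsPerm_apply, titsPerm_apply]
  dsimp only
  rw [Prod.mk.injEq]
  constructor
  · rw [pr_inv]
    show s i * (s i' * v * s i') * s i = s i * s i' * v * (s i' * s i)
    group
  · rw [hc0, hc1]
    by_cases h0 : v = s i' <;> by_cases h1 : s i' * v * s i' = s i
    · rw [if_pos h1, if_pos h0, if_pos h0]; simp [h1]
    · rw [if_neg h1, if_pos h0, if_pos h0]; simp [h1]
    · rw [if_pos h1, if_neg h0, if_neg h0]; simp [h1]
    · rw [if_neg h1, if_neg h0, if_neg h0]; simp [h1]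

private theorem titsPerm_mul_pow_apply (k : ℕ) (w : W) (ε : ℤˣ) :
    ((titsPerm cs i * titsPerm cs i')^k) (w, ε) =
      ((pr cs i i')^k * w * ((pr cs i i')⁻¹)^k,
        ε * ∏ n ∈ Finset.range (2*k), (if w = cseq cs i i' n then (-1 : ℤˣ) else 1)) := by
  induction k with
  | zero => simp
  | succ k ih =>
    rw [pow_succ']
    have happ : ∀ q : W × ℤˣ,
        (titsPerm cs i * titsPerm cs i' * (titsPerm cs i * titsPerm cs i')^k) q
        = (titsPerm cs i * titsPerm cs i') (((titsPerm cs i * titsPerm cs i')^k) q) := by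
      intro q; rfl
    rw [happ, ih, titsPerm_mul_apply]
    set v := (pr cs i i')^k * w * ((pr cs i i')⁻¹)^k with hv
    have hw : w = ((pr cs i i')⁻¹)^k * v * (pr cs i i')^k := by
      rw [hv]; group
    have hcond : ∀ n : ℕ, (v = cseq cs i i' n) ↔ (w = cseq cs i i' (n + 2*k)) := by
      intro n
      unfold cseq
      constructor
      · intro h
        rw [hw, h]
        calc ((pr cs i i')⁻¹)^k * (((pr cs i i')⁻¹)^n * s i') * (pr cs i i')^k
            = ((pr cs i i')⁻¹)^k * ((pr cs i i')⁻¹)^n * (s i' * (pr cs i i')^k) := by group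
          _ = ((pr cs i i')⁻¹)^k * ((pr cs i i')⁻¹)^n * (((pr cs i i')⁻¹)^k * s i') := by
              rw [simple_mul_pr_pow]
          _ = ((pr cs i i')⁻¹)^(n + 2*k) * s i' := by group
      · intro h
        rw [hv, h]
        calc (pr cs i i')^k * (((pr cs i i')⁻¹)^(n + 2*k) * s i') * ((pr cs i i')⁻¹)^k
            = (pr cs i i')^k * ((pr cs i i')⁻¹)^(n + 2*k) * (s i' * ((pr cs i i')⁻¹)^k) := by group
          _ = (pr cs i i')^k * ((pr cs i i')⁻¹)^(n + 2*k) * ((pr cs i i')^k * s i') := by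
              rw [simple_mul_pr_inv_pow]
          _ = ((pr cs i i')⁻¹)^n * s i' := by group
    rw [Prod.mk.injEq]
    constructor
    · rw [hv]; group
    · rw [hcond 0, hcond 1, Nat.zero_add,
        show 2*(k+1) = (2*k+1)+1 from by ring,
        Finset.prod_range_succ, Finset.prod_range_succ,
        show 1+2*k = 2*k+1 from by ring]
      simp [mul_assoc]

private theorem titsPerm_liftable :
    ∀ i i' : B, ((fun j => titsPerm cs j) i * (fun j => titsPerm cs j) i') ^ M i i' = 1 := by
  intro i i'
  apply Equiv.ext
  rintro ⟨w, ε⟩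
  show ((titsPerm cs i * titsPerm cs i') ^ M i i') (w, ε) = (w, ε)
  rw [titsPerm_mul_pow_apply]
  have hpm : (pr cs i i') ^ (M i i') = 1 := cs.simple_mul_simple_pow i i'
  have hpm' : ((pr cs i i')⁻¹) ^ (M i i') = 1 := by
    rw [inv_pow, hpm, inv_one]
  have hprod : (∏ n ∈ Finset.range (2 * M i i'),
      (if w = cseq cs i i' n then (-1:ℤˣ) else 1)) = 1 := by
    have hcp : ∀ n : ℕ, cseq cs i i' (M i i' + n) = cseq cs i i' n := by
      intro n
      unfold cseq
      rw [pow_add, hpm', one_mul]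
    rw [two_mul, Finset.prod_range_add]
    have he : ∀ n ∈ Finset.range (M i i'),
        (if w = cseq cs i i' (M i i' + n) then (-1:ℤˣ) else 1)
        = (if w = cseq cs i i' n then (-1:ℤˣ) else 1) := by
      intro n _; rw [hcp n]
    rw [Finset.prod_congr rfl he]
    exact Int.units_mul_self _
  rw [hpm, hpm', hprod, mul_one, one_mul, mul_one]

/-- The Tits permutation representation of the Coxeter group. -/
def titsHom : W →* Equiv.Perm (W × ℤˣ) :=
  cs.lift ⟨fun i => titsPerm cs i, titsPerm_liftable cs⟩

@[simp] theorem titsHom_simple (i : B) : titsHom cs (s i) = titsPerm cs i :=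
  cs.lift_apply_simple (titsPerm_liftable cs) i

end Lift


section Structure

theorem titsHom_apply (g w : W) (ε : ℤˣ) :
    titsHom cs g (w, ε) = (g * w * g⁻¹, ε * (titsHom cs g (w, 1)).2) := by
  suffices h : ∀ g : W, ∀ (w : W) (ε : ℤˣ),
      titsHom cs g (w, ε) = (g * w * g⁻¹, ε * (titsHom cs g (w, 1)).2) from h g w ε
  intro g
  induction g using cs.simple_induction_left with
  | one => intro w ε; simp
  | mul_simple_left g' i ih =>
    intro w ε
    have hmul : ∀ q : W × ℤˣ, titsHom cs (s i * g') q = titsPerm cs i (titsHom cs g' q) := by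
      intro q
      rw [map_mul, titsHom_simple]
      rfl
    rw [hmul, hmul, ih w ε, ih w 1, titsPerm_apply, titsPerm_apply]
    dsimp only
    rw [Prod.mk.injEq]
    constructor
    · rw [mul_inv_rev, cs.inv_simple]
      group
    · by_cases hc : g' * w * g'⁻¹ = s i
      · rw [if_pos hc, if_pos hc, one_mul, mul_neg]
      · rw [if_neg hc, if_neg hc, one_mul]

/-- The sign of the Tits representation: `titsSign g w` is the sign by which
`titsHom g` changes the second component above `w`. -/
def titsSign (g w : W) : ℤˣ := (titsHom cs g (w, 1)).2

theorem titsHom_apply' (g w : W) (ε : ℤˣ) :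
    titsHom cs g (w, ε) = (g * w * g⁻¹, ε * titsSign cs g w) :=
  titsHom_apply cs g w ε

theorem titsSign_mul (g h w : W) :
    titsSign cs (g * h) w = titsSign cs h w * titsSign cs g (h * w * h⁻¹) := by
  unfold titsSign
  have : titsHom cs (g * h) (w, 1) = titsHom cs g (titsHom cs h (w, 1)) := by
    rw [map_mul]; rfl
  have h2 : titsHom cs (g * h) (w, 1)
      = (g * (h * w * h⁻¹) * g⁻¹, (1 * titsSign cs h w) * titsSign cs g (h * w * h⁻¹)) := by
    rw [this, titsHom_apply' cs h w 1, titsHom_apply' cs g]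
  rw [h2]
  dsimp only
  rw [one_mul]
  rfl

end Structure

section Eta

theorem titsSign_one (w : W) : titsSign cs 1 w = 1 := by
  unfold titsSign
  rw [map_one]
  rfl

theorem titsSign_simple (i : B) (w : W) :
    titsSign cs (s i) w = if w = s i then (-1 : ℤˣ) else 1 := by
  unfold titsSign
  rw [titsHom_simple, titsPerm_apply]

theorem titsSign_wordProd_inv (ω : List B) (w : W) :
    titsSign cs (π ω)⁻¹ w
      = ((cs.leftInvSeq ω).map (fun t => if w = t then (-1:ℤˣ) else 1)).prod := by
  induction ω generalizing w with
  | nil =>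
    rw [cs.wordProd_nil, inv_one, titsSign_one]
    simp
  | cons i ω' ih =>
    have hπ : (π (i :: ω'))⁻¹ = (π ω')⁻¹ * s i := by
      rw [cs.wordProd_cons, mul_inv_rev, cs.inv_simple]
    have hlis : cs.leftInvSeq (i :: ω')
        = s i :: List.map (MulAut.conj (s i)) (cs.leftInvSeq ω') := rfl
    rw [hπ, titsSign_mul, titsSign_simple, hlis, List.map_cons, List.prod_cons, List.map_map]
    congr 1
    rw [ih]
    congr 1
    apply List.map_congr_left
    intro t _
    dsimp only [Function.comp]
    have hss : s i * s i = 1 := cs.simple_mul_simple_self i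
    have hcond : (s i * w * (s i)⁻¹ = t) ↔ (w = (MulAut.conj (s i)) t) := by
      rw [MulAut.conj_apply, cs.inv_simple]
      constructor
      · intro h
        rw [← h]
        calc w = (s i * s i) * w * (s i * s i) := by rw [hss, one_mul, mul_one]
          _ = s i * (s i * w * s i) * s i := by group
      · intro h
        rw [h]
        calc s i * (s i * t * s i) * s i = (s i * s i) * t * (s i * s i) := by group
          _ = t := by rw [hss, one_mul, mul_one]
    by_cases h : s i * w * (s i)⁻¹ = t
    · rw [if_pos h, if_pos (hcond.mp h)]
    · rw [if_neg h, if_neg (fun hc => h (hcond.mpr hc))]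

/-- The sign `η(w, t)`. -/
def eta (w t : W) : ℤˣ := titsSign cs w⁻¹ t

theorem eta_wordProd (ω : List B) (t : W) :
    eta cs (π ω) t = ((cs.leftInvSeq ω).map (fun r => if t = r then (-1:ℤˣ) else 1)).prod :=
  titsSign_wordProd_inv cs ω t

theorem titsSign_reflection_self {t : W} (ht : cs.IsReflection t) : titsSign cs t t = -1 := by
  obtain ⟨x, i, hts⟩ := ht
  have hxt : x⁻¹ * t * (x⁻¹)⁻¹ = s i := by rw [hts]; group
  have h1 : titsSign cs x⁻¹ t * titsSign cs x (s i) = 1 := by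
    have h := titsSign_mul cs x x⁻¹ t
    rw [mul_inv_cancel, titsSign_one, hxt] at h
    exact h.symm
  have h2 : titsSign cs (x * s i) (s i) = -titsSign cs x (s i) := by
    have h := titsSign_mul cs x (s i) (s i)
    rw [titsSign_simple, if_pos rfl] at h
    have e : s i * s i * (s i)⁻¹ = s i := by group
    rw [e, neg_one_mul] at h
    exact h
  have h3 : titsSign cs t t = titsSign cs x⁻¹ t * titsSign cs (x * s i) (s i) := by
    have h := titsSign_mul cs (x * s i) x⁻¹ t
    rw [hxt] at h
    rw [show x * s i * x⁻¹ = t from hts.symm] at h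
    exact h
  rw [h3, h2, mul_neg, h1]

theorem eta_mul_reflection {t : W} (ht : cs.IsReflection t) (w : W) :
    eta cs (t * w) t = - eta cs w t := by
  unfold eta
  have hinv : (t * w)⁻¹ = w⁻¹ * t := by rw [mul_inv_rev, ht.inv]
  rw [hinv, titsSign_mul]
  have e : t * t * t⁻¹ = t := by group
  rw [e, titsSign_reflection_self cs ht]
  exact neg_one_mul (titsSign cs w⁻¹ t)

set_option linter.unusedSectionVars false in
private theorem prod_signs_eq_one_of_not_mem {l : List W} {t : W} (h : t ∉ l) :
    (l.map (fun r => if t = r then (-1:ℤˣ) else 1)).prod = 1 := by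
  induction l with
  | nil => simp
  | cons a l ih =>
    have hne : t ≠ a := fun hc => h (by rw [hc]; exact List.mem_cons_self)
    rw [List.map_cons, List.prod_cons, if_neg hne, one_mul]
    exact ih (fun hc2 => h (List.mem_cons_of_mem a hc2))

set_option linter.unusedSectionVars false in
private theorem prod_signs_eq_neg_one_of_mem {l : List W} {t : W} (hnd : l.Nodup)
    (h : t ∈ l) : (l.map (fun r => if t = r then (-1:ℤˣ) else 1)).prod = -1 := by
  induction l with
  | nil => simp at h
  | cons a l ih =>
    rw [List.map_cons, List.prod_cons]
    rcases List.mem_cons.mp h with h1 | h1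
    · have hnmem : t ∉ l := by rw [h1]; exact (List.nodup_cons.mp hnd).1
      rw [if_pos h1, prod_signs_eq_one_of_not_mem hnmem, mul_one]
    · have hne : t ≠ a := fun hc => (List.nodup_cons.mp hnd).1 (by rw [← hc]; exact h1)
      rw [if_neg hne, one_mul]
      exact ih (List.nodup_cons.mp hnd).2 h1

theorem eta_eq_neg_one_iff {ω : List B} (hred : cs.IsReduced ω) (t : W) :
    eta cs (π ω) t = -1 ↔ t ∈ cs.leftInvSeq ω := by
  rw [eta_wordProd]
  constructor
  · intro h
    by_contra hc
    rw [prod_signs_eq_one_of_not_mem hc] at h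
    exact absurd (congrArg Units.val h) (by norm_num)
  · intro h
    exact prod_signs_eq_neg_one_of_mem hred.nodup_leftInvSeq h

theorem mem_leftInvSeq_of_isLeftInversion {ω : List B} (hred : cs.IsReduced ω) {t : W}
    (ht : cs.IsReflection t) (h : ℓ (t * π ω) < ℓ (π ω)) : t ∈ cs.leftInvSeq ω := by
  rw [← eta_eq_neg_one_iff cs hred]
  have hne : eta cs (t * π ω) t ≠ -1 := by
    intro hc
    obtain ⟨ψ, hψred, hψ⟩ := cs.exists_reduced_word' (t * π ω)
    rw [hψ] at hc
    have hinv := cs.isLeftInversion_of_mem_leftInvSeq hψred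
      ((eta_eq_neg_one_iff cs hψred t).mp hc)
    have h2 := hinv.2
    rw [← hψ, ← mul_assoc, ht.mul_self, one_mul] at h2
    omega
  have hone : eta cs (t * π ω) t = 1 := by
    rcases Int.units_eq_one_or (eta cs (t * π ω) t) with h1 | h1
    · exact h1
    · exact absurd h1 hne
  calc eta cs (π ω) t = eta cs (t * (t * π ω)) t := by
        rw [← mul_assoc, ht.mul_self, one_mul]
    _ = - eta cs (t * π ω) t := eta_mul_reflection cs ht _
    _ = -1 := by rw [hone]

theorem exchange_left {ω : List B} (hred : cs.IsReduced ω) {t : W}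
    (ht : cs.IsReflection t) (h : ℓ (t * π ω) < ℓ (π ω)) :
    ∃ ω', ω'.Sublist ω ∧ ω'.length + 1 = ω.length ∧ π ω' = t * π ω := by
  have hmem := mem_leftInvSeq_of_isLeftInversion cs hred ht h
  obtain ⟨j, hj, hget⟩ := List.getElem_of_mem hmem
  have hj' : j < ω.length := by
    rwa [cs.length_leftInvSeq] at hj
  refine ⟨ω.eraseIdx j, List.eraseIdx_sublist ω j, ?_, ?_⟩
  · exact List.length_eraseIdx_add_one hj'
  · have := cs.getD_leftInvSeq_mul_wordProd ω j
    rw [List.getD_eq_getElem _ _ hj, hget] at this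
    exact this.symm

theorem exchange_right {ω : List B} (hred : cs.IsReduced ω) {t : W}
    (ht : cs.IsReflection t) (h : ℓ (π ω * t) < ℓ (π ω)) :
    ∃ ω', ω'.Sublist ω ∧ ω'.length + 1 = ω.length ∧ π ω' = π ω * t := by
  have ht' : cs.IsReflection (π ω * t * (π ω)⁻¹) := ht.conj (π ω)
  have he : π ω * t * (π ω)⁻¹ * π ω = π ω * t := by group
  have h' : ℓ (π ω * t * (π ω)⁻¹ * π ω) < ℓ (π ω) := by rwa [he]
  obtain ⟨ω', hsub, hlen, hprod⟩ := exchange_left cs hred ht' h'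
  exact ⟨ω', hsub, hlen, by rwa [he] at hprod⟩

theorem exists_reduced_sublist (ω : List B) :
    ∃ ω', ω'.Sublist ω ∧ cs.IsReduced ω' ∧ π ω' = π ω := by
  induction ω using List.reverseRecOn with
  | nil => exact ⟨[], List.Sublist.refl _, by simp [CoxeterSystem.IsReduced], rfl⟩
  | append_singleton ω₀ i ih =>
    obtain ⟨ψ, hsub, hred, hprod⟩ := ih
    have hπ : π (ω₀ ++ [i]) = π ψ * s i := by
      rw [cs.wordProd_append, cs.wordProd_singleton, hprod]
    rcases cs.length_mul_simple (π ψ) i with h | h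
    · refine ⟨ψ ++ [i], hsub.append (List.Sublist.refl [i]), ?_, ?_⟩
      · show ℓ (π (ψ ++ [i])) = (ψ ++ [i]).length
        rw [cs.wordProd_append, cs.wordProd_singleton, h]
        have hlen : ℓ (π ψ) = ψ.length := hred
        simp [hlen]
      · rw [cs.wordProd_append, cs.wordProd_singleton, hπ]
    · have hlt : ℓ (π ψ * s i) < ℓ (π ψ) := by omega
      obtain ⟨ψ', hsub', hlen', hprod'⟩ :=
        exchange_right cs hred (cs.isReflection_simple i) hlt
      refine ⟨ψ', hsub'.trans (hsub.trans (List.sublist_append_left ω₀ [i])), ?_, ?_⟩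
      · show ℓ (π ψ') = ψ'.length
        rw [hprod']
        have : ℓ (π ψ) = ψ.length := hred
        omega
      · rw [hprod', hπ]

end Eta

section Chain

/-- One step in a Bruhat chain: multiply on the right by a reflection, increasing length. -/
def liftStep (y y' : W) : Prop :=
  ∃ t, cs.IsReflection t ∧ y' = y * t ∧ cs.length y < cs.length y'

/-- The Bruhat chain order. -/
def chainLE : W → W → Prop := Relation.ReflTransGen (liftStep cs)

theorem length_le_of_chainLE {y w : W} (h : chainLE cs y w) : ℓ y ≤ ℓ w := by
  induction h with
  | refl => exact le_refl _
  | tail _ hstep ih =>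
    obtain ⟨t, _, rfl, hlen⟩ := hstep
    omega

theorem subword_of_chainLE {x w : W} (h : chainLE cs x w) :
    ∀ ω : List B, cs.IsReduced ω → π ω = w →
      ∃ n, n.Sublist ω ∧ cs.IsReduced n ∧ π n = x := by
  induction h using Relation.ReflTransGen.head_induction_on with
  | refl => exact fun ω hred hπ => ⟨ω, List.Sublist.refl _, hred, hπ⟩
  | @head a c hstep hchain ih =>
    intro ω hred hπ
    obtain ⟨t, ht, hb, hlen⟩ := hstep
    obtain ⟨n₂, hsub₂, hred₂, hπ₂⟩ := ih ω hred hπ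
    have hxt : a = π n₂ * t := by
      rw [hπ₂, hb, mul_assoc, ht.mul_self, mul_one]
    have hlt : ℓ (π n₂ * t) < ℓ (π n₂) := by
      rw [← hxt, hπ₂]
      exact hlen
    obtain ⟨ψ, hsubψ, _, hπψ⟩ := exchange_right cs hred₂ ht hlt
    obtain ⟨n, hsubn, hnred, hnπ⟩ := exists_reduced_sublist cs ψ
    exact ⟨n, hsubn.trans (hsubψ.trans hsub₂), hnred, by rw [hnπ, hπψ, ← hxt]⟩

private def Mstmt (N : ℕ) : Prop :=
  ∀ (w₀ : W) (i : B), cs.length (w₀ * cs.simple i) ≤ N →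
    cs.length w₀ < cs.length (w₀ * cs.simple i) →
    ∀ y, chainLE cs y w₀ → chainLE cs (y * cs.simple i) (w₀ * cs.simple i)

private def Astmt (N : ℕ) : Prop :=
  ∀ ω : List B, cs.IsReduced ω → cs.length (cs.wordProd ω) ≤ N →
    ∀ l', l'.Sublist ω → chainLE cs (cs.wordProd l') (cs.wordProd ω)

private theorem am (N : ℕ) : Mstmt cs N ∧ Astmt cs N := by
  induction N using Nat.strong_induction_on with
  | _ N IH =>
  have hM : Mstmt cs N := by
    intro w₀ i hN hasc y hy
    induction hy using Relation.ReflTransGen.head_induction_on with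
    | refl => exact Relation.ReflTransGen.refl
    | @head a b hstep hchain ih =>
      obtain ⟨t, ht, hb, hlen⟩ := hstep
      have hbw : ℓ b ≤ ℓ w₀ := length_le_of_chainLE cs hchain
      have hNpos : 1 ≤ N := by omega
      have hstst : cs.IsReflection (s i * t * s i) := by
        have h1 := ht.conj (s i)
        rwa [cs.inv_simple] at h1
      have hss : s i * s i = 1 := cs.simple_mul_simple_self i
      have hkey : (a * s i) * (s i * t * s i) = b * s i := by
        rw [hb]
        calc (a * s i) * (s i * t * s i) = a * (s i * s i) * t * s i := by group
          _ = a * t * s i := by rw [hss, mul_one]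
      have hwstep : chainLE cs w₀ (w₀ * s i) :=
        Relation.ReflTransGen.single ⟨s i, cs.isReflection_simple i, rfl, hasc⟩
      rcases Nat.lt_or_ge (ℓ (a * s i)) (ℓ (b * s i)) with hlt | hge
      · exact Relation.ReflTransGen.head ⟨s i * t * s i, hstst, hkey.symm, hlt⟩ ih
      · have hne : ℓ (b * s i) ≠ ℓ (a * s i) := by
          have h1 := hstst.length_mul_left_ne (a * s i)
          rwa [hkey] at h1
        have hlt2 : ℓ (b * s i) < ℓ (a * s i) := by omega
        have h1 : ℓ (a * s i) ≤ ℓ a + 1 := by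
          have h2 := cs.length_mul_le a (s i)
          rwa [cs.length_simple] at h2
        have hdesc : ℓ (b * s i) < ℓ b := by omega
        have hbsi : ℓ (b * s i) + 1 = ℓ b := by
          rcases cs.length_mul_simple b i with hh | hh <;> omega
        obtain ⟨ψ₀, hψ₀red, hψ₀⟩ := cs.exists_reduced_word' (b * s i)
        have hπψ : π (ψ₀ ++ [i]) = b := by
          rw [cs.wordProd_append, cs.wordProd_singleton, ← hψ₀,
            cs.simple_mul_simple_cancel_right]
        have hψred : cs.IsReduced (ψ₀ ++ [i]) := by
          show ℓ (π (ψ₀ ++ [i])) = _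
          rw [hπψ]
          have e1 : ℓ (π ψ₀) = ψ₀.length := hψ₀red
          rw [← hψ₀] at e1
          simp only [List.length_append, List.length_singleton]
          omega
        have hab : chainLE cs a b :=
          Relation.ReflTransGen.single ⟨t, ht, hb, hlen⟩
        obtain ⟨n, hnsub, hnred, hnπ⟩ := subword_of_chainLE cs hab (ψ₀ ++ [i]) hψred hπψ
        obtain ⟨n₀, nb, hn, hn₀, hnb⟩ := List.sublist_append_iff.mp hnsub
        have hψ₀len : ℓ (π ψ₀) ≤ N - 1 := by
          have e1 : ℓ (π ψ₀) = ψ₀.length := hψ₀red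
          rw [← hψ₀] at e1 ⊢
          omega
        have hchainb : chainLE cs b (w₀ * s i) := hchain.trans hwstep
        have hA' := (IH (N - 1) (by omega)).2
        have hM' := (IH (N - 1) (by omega)).1
        rcases List.sublist_singleton.mp hnb with hnb0 | hnb0
        · -- nb = []
          have hn' : n = n₀ := by rw [hn, hnb0, List.append_nil]
          have h2 : chainLE cs a (b * s i) := by
            have h3 := hA' ψ₀ hψ₀red hψ₀len n₀ hn₀
            rw [← hn', hnπ, ← hψ₀] at h3
            exact h3
          have h3 : chainLE cs (a * s i) ((b * s i) * s i) := by
            apply hM' (b * s i) i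
            · rw [cs.simple_mul_simple_cancel_right]; omega
            · rw [cs.simple_mul_simple_cancel_right]; omega
            · exact h2
          rw [cs.simple_mul_simple_cancel_right] at h3
          exact h3.trans hchainb
        · -- nb = [i]
          have hn' : n = n₀ ++ [i] := by rw [hn, hnb0]
          have hπn₀ : π n₀ = a * s i := by
            have h4 : π n = π n₀ * s i := by
              rw [hn', cs.wordProd_append, cs.wordProd_singleton]
            rw [hnπ] at h4
            rw [← cs.simple_mul_simple_cancel_right (w := π n₀) i, ← h4]
          have h2 : chainLE cs (a * s i) (b * s i) := by
            have h3 := hA' ψ₀ hψ₀red hψ₀len n₀ hn₀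
            rw [hπn₀, ← hψ₀] at h3
            exact h3
          have h4 : chainLE cs (b * s i) b :=
            Relation.ReflTransGen.single ⟨s i, cs.isReflection_simple i,
              (cs.simple_mul_simple_cancel_right i).symm, by omega⟩
          exact (h2.trans h4).trans hchainb
  have hA : Astmt cs N := by
    intro ω
    induction ω using List.reverseRecOn with
    | nil =>
      intro _ _ l' hsub
      rw [List.sublist_nil.mp hsub]
      exact Relation.ReflTransGen.refl
    | append_singleton ω₀ i ihA =>
      intro hred hlen l' hsub
      have hred₀ : cs.IsReduced ω₀ := by
        have h1 := hred.take ω₀.length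
        rwa [List.take_left] at h1
      have hπs : π (ω₀ ++ [i]) = π ω₀ * s i := by
        rw [cs.wordProd_append, cs.wordProd_singleton]
      have hlω : ℓ (π (ω₀ ++ [i])) = ω₀.length + 1 := by
        have := hred
        unfold CoxeterSystem.IsReduced at this
        simp only [List.length_append, List.length_singleton] at this
        omega
      have hasc : ℓ (π ω₀) < ℓ (π ω₀ * s i) := by
        have e1 : ℓ (π ω₀) = ω₀.length := hred₀
        rw [← hπs]
        omega
      have hlen₀ : ℓ (π ω₀) ≤ N := by
        have e1 : ℓ (π ω₀) = ω₀.length := hred₀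
        omega
      obtain ⟨la, lb, hl, hla, hlb⟩ := List.sublist_append_iff.mp hsub
      rcases List.sublist_singleton.mp hlb with hlb0 | hlb0
      · have hl' : l' = la := by rw [hl, hlb0, List.append_nil]
        have h2 := ihA hred₀ hlen₀ la hla
        rw [hl']
        refine h2.trans ?_
        rw [hπs]
        exact Relation.ReflTransGen.single ⟨s i, cs.isReflection_simple i, rfl, hasc⟩
      · have hl' : l' = la ++ [i] := by rw [hl, hlb0]
        have h2 := ihA hred₀ hlen₀ la hla
        have h3 := hM (π ω₀) i (by rw [← hπs]; omega) hasc (π la) h2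
        rw [hl', cs.wordProd_append, cs.wordProd_singleton, hπs]
        exact h3
  exact ⟨hM, hA⟩

theorem chainLE_of_sublist {ω l' : List B} (hred : cs.IsReduced ω) (hsub : l'.Sublist ω) :
    chainLE cs (cs.wordProd l') (cs.wordProd ω) :=
  (am cs (cs.length (cs.wordProd ω))).2 ω hred (le_refl _) l' hsub

theorem bruhatLE_of_chainLE {x w : W} (h : chainLE cs x w) : bruhatLE cs x w := by
  obtain ⟨ω, hred, hπ⟩ := cs.exists_reduced_word' w
  obtain ⟨n, hsub, _, hnπ⟩ := subword_of_chainLE cs h ω hred hπ.symm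
  exact ⟨ω, hred, hπ.symm, n, hsub, hnπ⟩

theorem chainLE_of_bruhatLE {x w : W} (h : bruhatLE cs x w) : chainLE cs x w := by
  obtain ⟨ω, hred, hπ, l', hsub, hx⟩ := h
  have := chainLE_of_sublist cs hred hsub
  rwa [hx, hπ] at this

end Chain

section Parabolic

variable (J : Set B)

theorem mem_WJ_iff {v : W} :
    v ∈ WJ cs J ↔ ∃ ω : List B, (∀ i ∈ ω, i ∈ J) ∧ π ω = v := by
  constructor
  · intro h
    induction h using Subgroup.closure_induction with
    | mem x hx =>
      obtain ⟨i, hi, rfl⟩ := hx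
      exact ⟨[i], by simpa using hi, cs.wordProd_singleton i⟩
    | one => exact ⟨[], by simp, cs.wordProd_nil⟩
    | mul x y hx hy ihx ihy =>
      obtain ⟨ω₁, hJ₁, h₁⟩ := ihx
      obtain ⟨ω₂, hJ₂, h₂⟩ := ihy
      refine ⟨ω₁ ++ ω₂, ?_, ?_⟩
      · intro i hi
        rcases List.mem_append.mp hi with h | h
        · exact hJ₁ i h
        · exact hJ₂ i h
      · rw [cs.wordProd_append, h₁, h₂]
    | inv x hx ih =>
      obtain ⟨ω, hJ₁, h₁⟩ := ih
      refine ⟨ω.reverse, ?_, ?_⟩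
      · intro i hi
        exact hJ₁ i (List.mem_reverse.mp hi)
      · rw [cs.wordProd_reverse, h₁]
  · rintro ⟨ω, hJw, rfl⟩
    induction ω with
    | nil => rw [cs.wordProd_nil]; exact one_mem _
    | cons i ω ih =>
      rw [cs.wordProd_cons]
      exact mul_mem (Subgroup.subset_closure ⟨i, hJw i (List.mem_cons_self), rfl⟩)
        (ih (fun j hj => hJw j (List.mem_cons_of_mem i hj)))

theorem simple_mem_WJ {i : B} (hi : i ∈ J) : s i ∈ WJ cs J :=
  Subgroup.subset_closure ⟨i, hi, rfl⟩

theorem exists_reduced_JWord {v : W} (h : v ∈ WJ cs J) :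
    ∃ ω, (∀ i ∈ ω, i ∈ J) ∧ cs.IsReduced ω ∧ π ω = v := by
  obtain ⟨ω, hJw, hπ⟩ := (mem_WJ_iff cs J).mp h
  obtain ⟨ω', hsub, hred, hπ'⟩ := exists_reduced_sublist cs ω
  exact ⟨ω', fun i hi => hJw i (hsub.subset hi), hred, by rw [hπ', hπ]⟩

/-- Additivity of lengths for a minimal-length coset representative. -/
theorem min_additive {u₀ : W} (hmin : ∀ c ∈ WJ cs J, ℓ u₀ ≤ ℓ (u₀ * c)) :
    ∀ c ∈ WJ cs J, ℓ (u₀ * c) = ℓ u₀ + ℓ c := by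
  suffices h : ∀ n : ℕ, ∀ c ∈ WJ cs J, ℓ c = n → ℓ (u₀ * c) = ℓ u₀ + ℓ c by
    exact fun c hc => h (ℓ c) c hc rfl
  intro n
  induction n using Nat.strong_induction_on with
  | _ n IHn =>
  intro c hc hn
  obtain ⟨ω, hJw, hred, hπ⟩ := exists_reduced_JWord cs J hc
  rcases List.eq_nil_or_concat ω with rfl | ⟨ω₀, j, rfl⟩
  · rw [cs.wordProd_nil] at hπ
    rw [← hπ]
    simp
  · rw [List.concat_eq_append] at *
    have hred₀ : cs.IsReduced ω₀ := by
      have h1 := hred.take ω₀.length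
      rwa [List.take_left] at h1
    have hc' : π ω₀ ∈ WJ cs J :=
      (mem_WJ_iff cs J).mpr ⟨ω₀, fun i hi => hJw i (List.mem_append_left _ hi), rfl⟩
    have hlc' : ℓ (π ω₀) = ω₀.length := hred₀
    have hlc : ℓ c = ω₀.length + 1 := by
      rw [← hπ]
      have h1 : ℓ (π (ω₀ ++ [j])) = (ω₀ ++ [j]).length := hred
      simpa using h1
    have hcsplit : c = π ω₀ * s j := by
      rw [← hπ, cs.wordProd_append, cs.wordProd_singleton]
    have hIH : ℓ (u₀ * π ω₀) = ℓ u₀ + ℓ (π ω₀) := by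
      apply IHn (ℓ (π ω₀)) (by omega) (π ω₀) hc' rfl
    have hjJ : j ∈ J := hJw j (List.mem_append_right _ (List.mem_singleton_self j))
    -- main claim: right multiplication by s j increases length
    have hstep : ℓ (u₀ * π ω₀ * s j) = ℓ (u₀ * π ω₀) + 1 := by
      rcases cs.length_mul_simple (u₀ * π ω₀) j with h1 | h1
      · exact h1
      · exfalso
        -- descent case: use the exchange property
        obtain ⟨α, hαred, hα⟩ := cs.exists_reduced_word' u₀
        have hαβred : cs.IsReduced (α ++ ω₀) := by
          show ℓ (π (α ++ ω₀)) = _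
          rw [cs.wordProd_append, ← hα]
          simp only [List.length_append]
          have e1 : ℓ u₀ = α.length := by rw [hα]; exact hαred
          omega
        have hαβπ : π (α ++ ω₀) = u₀ * π ω₀ := by
          rw [cs.wordProd_append, ← hα]
        have hlt : ℓ (π (α ++ ω₀) * s j) < ℓ (π (α ++ ω₀)) := by
          rw [hαβπ]; omega
        obtain ⟨ψ, hψsub, hψlen, hψπ⟩ :=
          exchange_right cs hαβred (cs.isReflection_simple j) hlt
        obtain ⟨ψa, ψb, hψ, hψa, hψb⟩ := List.sublist_append_iff.mp hψsub
        have hψblen : ψb.length ≤ ω₀.length := hψb.length_le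
        have hψalen : ψa.length ≤ α.length := hψa.length_le
        have hψlen' : ψa.length + ψb.length + 1 = α.length + ω₀.length := by
          rw [hψ] at hψlen
          simpa using hψlen
        have hψbJ : π ψb ∈ WJ cs J :=
          (mem_WJ_iff cs J).mpr ⟨ψb, fun i hi => hJw i
            (List.mem_append_left _ (hψb.subset hi)), rfl⟩
        rcases Nat.lt_or_ge ψa.length α.length with hcase | hcase
        · -- deletion in the α part: contradicts minimality of u₀
          have hu₁ : π ψa = u₀ * (π ω₀ * s j * (π ψb)⁻¹) := by
            have h2 : π ψ = π ψa * π ψb := by rw [hψ, cs.wordProd_append]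
            rw [hψπ, hαβπ] at h2
            have := congrArg (· * (π ψb)⁻¹) h2
            simp only [mul_assoc, mul_inv_cancel, mul_one] at this
            rw [← this]
            group
          have hcWJ : π ω₀ * s j * (π ψb)⁻¹ ∈ WJ cs J :=
            mul_mem (mul_mem hc' (simple_mem_WJ cs J hjJ)) (inv_mem hψbJ)
          have h3 := hmin _ hcWJ
          rw [← hu₁] at h3
          have h4 : ℓ (π ψa) ≤ ψa.length := cs.length_wordProd_le ψa
          have h5 : ℓ u₀ = α.length := by rw [hα]; exact hαred
          omega
        · -- ψa = α: deletion in the ω₀ part: contradicts reducedness of ω₀ ++ [j]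
          have hψaα : ψa = α := hψa.eq_of_length (by omega)
          have h2 : π ψ = u₀ * π ψb := by
            rw [hψ, cs.wordProd_append, hψaα, ← hα]
          have h3 : π ω₀ * s j = π ψb := by
            have h4 := hψπ.symm.trans h2
            rw [hαβπ] at h4
            have := congrArg (fun z => u₀⁻¹ * z) h4
            simpa [← mul_assoc] using this
          have h5 : ℓ (π ω₀ * s j) ≤ ψb.length := by
            rw [h3]; exact cs.length_wordProd_le ψb
          have h6 : ℓ c ≤ ψb.length := by rw [hcsplit]; exact h5
          omega
    have hl2 : ℓ (π ω₀ * s j) = ω₀.length + 1 := by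
      rw [← hcsplit]; exact hlc
    rw [hcsplit, ← mul_assoc, hstep, hIH]
    omega

theorem min_isMinRep {u₀ : W} (hmin : ∀ c ∈ WJ cs J, ℓ u₀ ≤ ℓ (u₀ * c)) :
    IsMinRep cs J u₀ := by
  intro i hi
  have h1 := min_additive cs J hmin (s i) (simple_mem_WJ cs J hi)
  rwa [cs.length_simple] at h1

theorem minRep_unique {u₀ u : W} (hmin : ∀ c ∈ WJ cs J, ℓ u₀ ≤ ℓ (u₀ * c))
    (hu : IsMinRep cs J u) (hc : u₀⁻¹ * u ∈ WJ cs J) : u = u₀ := by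
  have hu₀c : u = u₀ * (u₀⁻¹ * u) := by group
  obtain ⟨ω, hJw, hred, hπ⟩ := exists_reduced_JWord cs J hc
  rcases List.eq_nil_or_concat ω with rfl | ⟨ω₀, j, rfl⟩
  · rw [cs.wordProd_nil] at hπ
    rw [hu₀c, ← hπ, mul_one]
  · rw [List.concat_eq_append] at *
    exfalso
    have hred₀ : cs.IsReduced ω₀ := by
      have h1 := hred.take ω₀.length
      rwa [List.take_left] at h1
    have hc₀ : π ω₀ ∈ WJ cs J :=
      (mem_WJ_iff cs J).mpr ⟨ω₀, fun i hi => hJw i (List.mem_append_left _ hi), rfl⟩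
    have hjJ : j ∈ J := hJw j (List.mem_append_right _ (List.mem_singleton_self j))
    have hsplit : u₀⁻¹ * u = π ω₀ * s j := by
      rw [← hπ, cs.wordProd_append, cs.wordProd_singleton]
    have husj : u * s j = u₀ * π ω₀ := by
      rw [hu₀c, hsplit]
      calc u₀ * (π ω₀ * s j) * s j = u₀ * (π ω₀ * (s j * s j)) := by group
        _ = u₀ * π ω₀ := by rw [cs.simple_mul_simple_self, mul_one]
    have hlusj : ℓ (u * s j) = ℓ u₀ + ℓ (π ω₀) := by
      rw [husj]
      exact min_additive cs J hmin _ hc₀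
    have hlu : ℓ u = ℓ u₀ + ℓ (u₀⁻¹ * u) := by
      conv_lhs => rw [hu₀c]
      exact min_additive cs J hmin _ hc
    have hlc : ℓ (u₀⁻¹ * u) = ω₀.length + 1 := by
      rw [← hπ]
      have h1 : ℓ (π (ω₀ ++ [j])) = (ω₀ ++ [j]).length := hred
      simpa using h1
    have hlc₀ : ℓ (π ω₀) = ω₀.length := hred₀
    have hmr := hu j hjJ
    omega

theorem exists_coset_min (x : W) :
    ∃ u₀ : W, u₀⁻¹ * x ∈ WJ cs J ∧ ∀ u : W, u⁻¹ * x ∈ WJ cs J → ℓ u₀ ≤ ℓ u := by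
  have hS : ∃ n : ℕ, ∃ u : W, u⁻¹ * x ∈ WJ cs J ∧ ℓ u = n :=
    ⟨ℓ x, x, by rw [inv_mul_cancel]; exact one_mem _, rfl⟩
  obtain ⟨u₀, hu₀, hlen⟩ := Nat.find_spec hS
  refine ⟨u₀, hu₀, ?_⟩
  intro u hu
  rw [hlen]
  exact Nat.find_le ⟨u, hu, rfl⟩

theorem coset_min_own {u₀ x : W} (h₀ : u₀⁻¹ * x ∈ WJ cs J)
    (hmin : ∀ u : W, u⁻¹ * x ∈ WJ cs J → ℓ u₀ ≤ ℓ u) :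
    ∀ c ∈ WJ cs J, ℓ u₀ ≤ ℓ (u₀ * c) := by
  intro c hc
  apply hmin
  have : (u₀ * c)⁻¹ * x = c⁻¹ * (u₀⁻¹ * x) := by group
  rw [this]
  exact mul_mem (inv_mem hc) h₀

theorem chainLE_mul_JWord {u₀ : W} (hmin : ∀ c ∈ WJ cs J, ℓ u₀ ≤ ℓ (u₀ * c))
    {ω : List B} (hJw : ∀ i ∈ ω, i ∈ J) (hred : cs.IsReduced ω) :
    chainLE cs u₀ (u₀ * π ω) := by
  induction ω using List.reverseRecOn with
  | nil =>
    rw [cs.wordProd_nil, mul_one]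
    exact Relation.ReflTransGen.refl
  | append_singleton ω₀ j ih =>
    have hred₀ : cs.IsReduced ω₀ := by
      have h1 := hred.take ω₀.length
      rwa [List.take_left] at h1
    have hJ₀ : ∀ i ∈ ω₀, i ∈ J := fun i hi => hJw i (List.mem_append_left _ hi)
    have hmem₀ : π ω₀ ∈ WJ cs J := (mem_WJ_iff cs J).mpr ⟨ω₀, hJ₀, rfl⟩
    have hmem : π (ω₀ ++ [j]) ∈ WJ cs J :=
      (mem_WJ_iff cs J).mpr ⟨ω₀ ++ [j], hJw, rfl⟩
    have hπs : π (ω₀ ++ [j]) = π ω₀ * s j := by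
      rw [cs.wordProd_append, cs.wordProd_singleton]
    have hasc : ℓ (u₀ * π ω₀) < ℓ (u₀ * π (ω₀ ++ [j])) := by
      rw [min_additive cs J hmin _ hmem₀, min_additive cs J hmin _ hmem]
      have h1 : ℓ (π ω₀) = ω₀.length := hred₀
      have h2 : ℓ (π (ω₀ ++ [j])) = (ω₀ ++ [j]).length := hred
      simp only [List.length_append, List.length_singleton] at h2
      omega
    refine Relation.ReflTransGen.tail (ih hJ₀ hred₀) ?_
    refine ⟨s j, cs.isReflection_simple j, ?_, hasc⟩
    rw [hπs, ← mul_assoc]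

/-- Parabolic projection preserves the Bruhat order. -/
theorem minrep_le_minrep {u x wJup w : W}
    (hu : IsMinRep cs J u) (hux : u⁻¹ * x ∈ WJ cs J)
    (hwJup : IsMinRep cs J wJup) (hwJw : wJup⁻¹ * w ∈ WJ cs J)
    (hle : bruhatLE cs x w) : bruhatLE cs u wJup := by
  obtain ⟨u₀, h₀, hmin⟩ := exists_coset_min cs J w
  have hmin' := coset_min_own cs J h₀ hmin
  have hwu₀ : wJup = u₀ := by
    apply minRep_unique cs J hmin' hwJup
    have e : u₀⁻¹ * wJup = (u₀⁻¹ * w) * (wJup⁻¹ * w)⁻¹ := by group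
    rw [e]
    exact mul_mem h₀ (inv_mem hwJw)
  obtain ⟨α, hαred, hα⟩ := cs.exists_reduced_word' u₀
  obtain ⟨β, hβJ, hβred, hβπ⟩ := exists_reduced_JWord cs J h₀
  have hαβπ : π (α ++ β) = w := by
    rw [cs.wordProd_append, ← hα, hβπ]
    group
  have hαβred : cs.IsReduced (α ++ β) := by
    show ℓ (π (α ++ β)) = _
    rw [hαβπ]
    have h1 : ℓ w = ℓ u₀ + ℓ (u₀⁻¹ * w) := by
      have h2 := min_additive cs J hmin' _ h₀
      rw [show u₀ * (u₀⁻¹ * w) = w from by group] at h2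
      exact h2
    have h2 : ℓ u₀ = α.length := by rw [hα]; exact hαred
    have h3 : ℓ (u₀⁻¹ * w) = β.length := by rw [← hβπ]; exact hβred
    simp only [List.length_append]
    omega
  obtain ⟨n, hnsub, hnred, hnπ⟩ :=
    subword_of_chainLE cs (chainLE_of_bruhatLE cs hle) (α ++ β) hαβred hαβπ
  obtain ⟨na, nb, hn, hna, hnb⟩ := List.sublist_append_iff.mp hnsub
  have hnbJ : π nb ∈ WJ cs J :=
    (mem_WJ_iff cs J).mpr ⟨nb, fun i hi => hβJ i (hnb.subset hi), rfl⟩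
  have hxz : (π na)⁻¹ * x ∈ WJ cs J := by
    have e : (π na)⁻¹ * x = π nb := by
      rw [← hnπ, hn, cs.wordProd_append]
      group
    rw [e]
    exact hnbJ
  obtain ⟨z₀, hz₀, hzmin⟩ := exists_coset_min cs J (π na)
  have hzmin' := coset_min_own cs J hz₀ hzmin
  have huz₀ : u = z₀ := by
    apply minRep_unique cs J hzmin' hu
    have e : z₀⁻¹ * u = (z₀⁻¹ * π na) * ((π na)⁻¹ * x) * (u⁻¹ * x)⁻¹ := by group
    rw [e]
    exact mul_mem (mul_mem hz₀ hxz) (inv_mem hux)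
  obtain ⟨m₀, hm₀sub, hm₀red, hm₀π⟩ := exists_reduced_sublist cs na
  obtain ⟨γ, hγJ, hγred, hγπ⟩ := exists_reduced_JWord cs J hz₀
  have hchain : chainLE cs z₀ (π na) := by
    have h1 := chainLE_mul_JWord cs J hzmin' hγJ hγred
    rw [hγπ, show z₀ * (z₀⁻¹ * π na) = π na from by group] at h1
    exact h1
  obtain ⟨q, hqsub, _, hqπ⟩ := subword_of_chainLE cs hchain m₀ hm₀red hm₀π
  refine ⟨α, hαred, ?_, q, ?_, ?_⟩
  · rw [← hα, hwu₀]
  · exact hqsub.trans (hm₀sub.trans hna)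
  · rw [hqπ, huz₀]

end Parabolic


section Hecke

variable (Tb : Module.Basis W R H)

theorem mulT_mem_span (hT : IsHeckeBasis cs Tb) (m : List B) (a : W) :
    Tb a * Tb (cs.wordProd m) ∈
      Submodule.span R ((fun n => Tb (a * cs.wordProd n)) '' {n : List B | n.Sublist m}) := by
  induction m using List.reverseRecOn with
  | nil =>
    rw [cs.wordProd_nil, hT.T_one, mul_one]
    exact Submodule.subset_span ⟨[], List.Sublist.refl _, by
      show Tb (a * cs.wordProd []) = Tb a
      rw [cs.wordProd_nil, mul_one]⟩
  | append_singleton m₀ i ih =>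
    have hstep : ∀ h ∈ Submodule.span R
        ((fun n => Tb (a * cs.wordProd n)) '' {n : List B | n.Sublist m₀}),
        h * Tb (cs.simple i) ∈ Submodule.span R
          ((fun n => Tb (a * cs.wordProd n)) '' {n : List B | n.Sublist (m₀ ++ [i])}) := by
      intro h hmem
      refine Submodule.span_induction ?_ ?_ ?_ ?_ hmem
      · rintro x ⟨n, hn, rfl⟩
        have hmem1 : Tb (a * cs.wordProd (n ++ [i])) ∈ Submodule.span R
            ((fun n => Tb (a * cs.wordProd n)) '' {n : List B | n.Sublist (m₀ ++ [i])}) :=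
          Submodule.subset_span ⟨n ++ [i], List.Sublist.append hn (List.Sublist.refl [i]), rfl⟩
        have hmem2 : Tb (a * cs.wordProd n) ∈ Submodule.span R
            ((fun n => Tb (a * cs.wordProd n)) '' {n : List B | n.Sublist (m₀ ++ [i])}) :=
          Submodule.subset_span ⟨n, hn.trans (List.sublist_append_left m₀ [i]), rfl⟩
        have hπn : a * cs.wordProd (n ++ [i]) = (a * cs.wordProd n) * cs.simple i := by
          rw [cs.wordProd_append, cs.wordProd_singleton, mul_assoc]
        rcases cs.length_mul_simple (a * cs.wordProd n) i with hlen | hlen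
        · have hT2 := hT.T_mul (a * cs.wordProd n) (cs.simple i)
            (by rw [cs.length_simple]; exact hlen)
          rw [hT2, ← hπn]
          exact hmem1
        · have hlt : cs.length ((a * cs.wordProd n) * cs.simple i)
              < cs.length (a * cs.wordProd n) := by omega
          rw [hT.mul_simple _ i hlt, ← hπn]
          exact Submodule.add_mem _ hmem1 (Submodule.smul_mem _ _ hmem2)
      · rw [zero_mul]; exact Submodule.zero_mem _
      · intro x y _ _ hx hy
        rw [add_mul]; exact Submodule.add_mem _ hx hy
      · intro r x _ hx
        rw [smul_mul_assoc]; exact Submodule.smul_mem _ _ hx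
    have hmono : Submodule.span R ((fun n => Tb (a * cs.wordProd n)) '' {n : List B | n.Sublist m₀})
        ≤ Submodule.span R
          ((fun n => Tb (a * cs.wordProd n)) '' {n : List B | n.Sublist (m₀ ++ [i])}) := by
      apply Submodule.span_mono
      rintro x ⟨n, hn, rfl⟩
      exact ⟨n, hn.trans (List.sublist_append_left m₀ [i]), rfl⟩
    have hπm : cs.wordProd (m₀ ++ [i]) = cs.wordProd m₀ * cs.simple i := by
      rw [cs.wordProd_append, cs.wordProd_singleton]
    rcases cs.length_mul_simple (cs.wordProd m₀) i with hlen | hlen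
    · have hT2 : Tb (cs.wordProd (m₀ ++ [i])) = Tb (cs.wordProd m₀) * Tb (cs.simple i) := by
        rw [hπm]
        exact (hT.T_mul _ _ (by rw [cs.length_simple]; exact hlen)).symm
      rw [hT2, ← mul_assoc]
      exact hstep _ ih
    · have hlt : cs.length (cs.wordProd m₀ * cs.simple i) < cs.length (cs.wordProd m₀) := by
        omega
      have hT3 : Tb (cs.wordProd (m₀ ++ [i]))
          = Tb (cs.wordProd m₀) * Tb (cs.simple i) - (qinv - q) • Tb (cs.wordProd m₀) := by
        rw [hπm, hT.mul_simple (cs.wordProd m₀) i hlt, add_sub_cancel_right]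
      rw [hT3, mul_sub, ← mul_assoc, mul_smul_comm]
      exact Submodule.sub_mem _ (hstep _ ih) (Submodule.smul_mem _ _ (hmono ih))

end Hecke

/-- if u ∈ W^J and w = w^J · w_J with u ≰ w^J in Bruhat order,
then (T_{u⁻¹} C_w)|_J = 0. -/
theorem resMap_TC_vanish (cs : CoxeterSystem M W) (Tb : Module.Basis W R H)
    (hT : IsHeckeBasis cs Tb) (C : W → H) (hC : IsKLBasis cs Tb C)
    (J : Set B) (u wJup wJ w : W)
    (hu : IsMinRep cs J u) (hwJup : IsMinRep cs J wJup) (hwJ : wJ ∈ WJ cs J)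
    (hw : w = wJup * wJ) (hnle : ¬ bruhatLE cs u wJup) :
    resMap cs Tb J (Tb u⁻¹ * C w) = 0 := by
  have hwJw : wJup⁻¹ * w ∈ WJ cs J := by
    rw [hw, ← mul_assoc, inv_mul_cancel, one_mul]
    exact hwJ
  have hkill : ∀ x : W, bruhatLE cs x w → resMap cs Tb J (Tb u⁻¹ * Tb x) = 0 := by
    intro x hx
    obtain ⟨l, hlred, hlπ, l', hsubl, hxπ⟩ := hx
    have hmem := mulT_mem_span cs Tb hT l' u⁻¹
    rw [hxπ] at hmem
    have hker : Submodule.span R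
        ((fun n => Tb (u⁻¹ * cs.wordProd n)) '' {n : List B | n.Sublist l'})
        ≤ LinearMap.ker (resMap cs Tb J) := by
      rw [Submodule.span_le]
      rintro y ⟨n, hn, rfl⟩
      rw [SetLike.mem_coe, LinearMap.mem_ker]
      show (Tb.constr R (fun w => if w ∈ WJ cs J then Tb w else 0)) (Tb (u⁻¹ * cs.wordProd n)) = 0
      rw [Module.Basis.constr_basis]
      by_cases hg : u⁻¹ * cs.wordProd n ∈ WJ cs J
      · exfalso
        have hxn : bruhatLE cs (cs.wordProd n) w := ⟨l, hlred, hlπ, n, hn.trans hsubl, rfl⟩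
        exact hnle (minrep_le_minrep cs J hu hg hwJup hwJw hxn)
      · rw [if_neg hg]
    exact LinearMap.mem_ker.mp (hker hmem)
  have h1 : C w = ∑ x ∈ (Tb.repr (C w)).support, (Tb.repr (C w)) x • Tb x := by
    conv_lhs => rw [← Tb.linearCombination_repr (C w)]
    rw [Finsupp.linearCombination_apply, Finsupp.sum]
  rw [h1, Finset.mul_sum]
  have h2 : ∀ x ∈ (Tb.repr (C w)).support,
      Tb u⁻¹ * ((Tb.repr (C w)) x • Tb x) = (Tb.repr (C w)) x • (Tb u⁻¹ * Tb x) := by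
    intro x _
    rw [mul_smul_comm]
  rw [Finset.sum_congr rfl h2, map_sum]
  apply Finset.sum_eq_zero
  intro x hxs
  rw [map_smul]
  have hble : bruhatLE cs x w := by
    by_contra hc
    exact Finsupp.mem_support_iff.mp hxs (hC.repr_eq_zero x w hc)
  rw [hkill x hble, smul_zero]

end HeckeRes
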